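/- Let P ≥ 0, set r_max = 1 − exp(−1/(P+1)), and define p(x) = (1+P)/(1−x) for 0 ≤ x < r_max and p(x) = 0 for r_max ≤ x ≤ 1. Then: (i) ∫_0^1 p(x) dx = 1; (ii) ∫_0^1 x·p(x) dx = 1 − (P+1)·(1 − exp(−1/(P+1))); and (iii) for every a ∈ [0, r_max], ∫_0^1 p(b)·min(a,b) db + a·P = (1−a)·∫_0^a p(b) db, i.e., the equilibrium indifference condition of the CfR game with perfectly positively correlated risks (ρ = 1) holds on the support of p. -/

import Mathlib

open MeasureTheory Set

lemma int_one_div_one_sub {s t : ℝ} (hs : s < 1) (ht : t < 1) :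
    ∫ x in s..t, 1 / (1 - x) = Real.log (1 - s) - Real.log (1 - t) := by
  have h := intervalIntegral.integral_comp_sub_left (a := s) (b := t) (fun y => 1 / y) 1
  calc ∫ x in s..t, 1 / (1 - x) = ∫ y in 1 - t..1 - s, 1 / y := h
    _ = Real.log ((1 - s) / (1 - t)) := by
        apply integral_one_div
        exact Set.notMem_uIcc_of_lt (by linarith) (by linarith)
    _ = Real.log (1 - s) - Real.log (1 - t) := Real.log_div (by linarith) (by linarith)

lemma cont_g {P r : ℝ} (hr : r < 1) {S : Set ℝ} (hS : S ⊆ Set.Iic r) :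
    ContinuousOn (fun x => (1 + P) / (1 - x)) S := by
  apply ContinuousOn.div continuousOn_const
  · exact (continuous_const.sub continuous_id).continuousOn
  · intro x hx
    have := hS hx
    simp only [Set.mem_Iic] at this
    intro h; linarith

theorem stmt15 (P : ℝ) (hP : 0 ≤ P) (rmax : ℝ)
    (hrmax : rmax = 1 - Real.exp (-(1 / (P + 1))))
    (p : ℝ → ℝ)
    (hp : ∀ x ∈ Set.Icc (0 : ℝ) 1,
      p x = if x < rmax then (1 + P) / (1 - x) else 0) :
    (∫ x in (0 : ℝ)..1, p x) = 1 ∧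
    (∫ x in (0 : ℝ)..1, x * p x) = 1 - (P + 1) * (1 - Real.exp (-(1 / (P + 1)))) ∧
    ∀ a ∈ Set.Icc (0 : ℝ) rmax,
      (∫ b in (0 : ℝ)..1, p b * min a b) + a * P = (1 - a) * ∫ b in (0 : ℝ)..a, p b := by
  set r := rmax with hr
  set g : ℝ → ℝ := fun x => (1 + P) / (1 - x) with hg
  set q : ℝ → ℝ := fun x => if x < r then g x else 0 with hqdef
  have hP1 : (0:ℝ) < P + 1 := by linarith
  have hE0 : 0 < Real.exp (-(1 / (P + 1))) := Real.exp_pos _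
  have hE1 : Real.exp (-(1 / (P + 1))) < 1 := by
    apply Real.exp_lt_one_iff.mpr
    have : 0 < 1 / (P + 1) := by positivity
    linarith
  have hr1 : r < 1 := by rw [hrmax]; linarith
  have hr0 : 0 < r := by rw [hrmax]; linarith
  have hLr : Real.log (1 - r) = -(1 / (P + 1)) := by
    rw [hrmax]; simp [Real.log_exp]
  -- q as an indicator
  have hqind : q = (Set.Iio r).indicator g := by
    funext x
    by_cases h : x < r
    · simp [hqdef, h, Set.indicator_of_mem (Set.mem_Iio.mpr h)]
    · simp [hqdef, h, Set.indicator_of_notMem (fun hx => h (Set.mem_Iio.mp hx))]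
  -- q is interval integrable everywhere
  have hqint : ∀ s t : ℝ, IntervalIntegrable q volume s t := by
    intro s t
    rw [intervalIntegrable_iff, hqind, IntegrableOn,
      integrable_indicator_iff measurableSet_Iio, IntegrableOn,
      Measure.restrict_restrict measurableSet_Iio, ← IntegrableOn]
    have hcont : ContinuousOn g (Set.Icc (min s t) r) :=
      cont_g hr1 (fun x hx => Set.mem_Iic.mpr hx.2)
    apply (hcont.integrableOn_Icc).mono_set
    intro x hx
    rcases hx with ⟨hx1, hx2⟩
    exact ⟨hx2.1.le, (Set.mem_Iio.mp hx1).le⟩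
  have hqmint : ∀ (m : ℝ → ℝ), Continuous m → ∀ s t : ℝ,
      IntervalIntegrable (fun x => q x * m x) volume s t := by
    intro m hm s t
    exact (hqint s t).mul_continuousOn hm.continuousOn
  -- a.e. away from r
  have haer : ∀ᵐ x : ℝ, x ≠ r := by
    have h0 : volume ({r} : Set ℝ) = 0 := measure_singleton r
    rw [ae_iff]
    convert h0 using 2
    ext x; simp
  -- integral of q * m over [s,t] ⊆ [-∞, r] equals integral of g * m
  have hcong : ∀ (m : ℝ → ℝ) (s t : ℝ), s ≤ r → t ≤ r →
      ∫ x in s..t, q x * m x = ∫ x in s..t, g x * m x := by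
    intro m s t hs ht
    apply intervalIntegral.integral_congr_ae
    filter_upwards [haer] with x hx hxI
    have hxle : x ≤ max s t := (Set.mem_Ioc.mp hxI).2
    have : x < r := lt_of_le_of_ne (le_trans hxle (max_le hs ht)) hx
    simp [hqdef, this]
  -- zero on [s,t] ⊆ [r, ∞)
  have hzero : ∀ (m : ℝ → ℝ) (s t : ℝ), r ≤ s → r ≤ t →
      ∫ x in s..t, q x * m x = 0 := by
    intro m s t hs ht
    rw [intervalIntegral.integral_congr (g := fun _ => (0:ℝ)), intervalIntegral.integral_zero]
    intro x hx
    have : r ≤ x := le_trans (le_min hs ht) hx.1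
    simp [hqdef, not_lt.mpr this]
  -- key: integral of q over [s,t] within [0,r]
  have hgi : ∀ s t : ℝ, s < 1 → t < 1 → IntervalIntegrable g volume s t := by
    intro s t hs ht
    apply ContinuousOn.intervalIntegrable
    apply cont_g (r := max s t) (lt_of_le_of_lt (le_refl _) (max_lt hs ht))
    intro x hx
    exact Set.mem_Iic.mpr hx.2
  have hQ : ∀ s t : ℝ, s ≤ r → t ≤ r →
      ∫ x in s..t, q x = (1 + P) * (Real.log (1 - s) - Real.log (1 - t)) := by
    intro s t hs ht
    have h1 : ∫ x in s..t, q x = ∫ x in s..t, g x * 1 := by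
      rw [← hcong (fun _ => 1) s t hs ht]
      simp
    rw [h1]
    simp only [mul_one]
    have : ∀ x, g x = (1 + P) * (1 / (1 - x)) := by intro x; rw [hg]; ring
    simp only [this]
    rw [intervalIntegral.integral_const_mul, int_one_div_one_sub (by linarith) (by linarith)]
  -- integral of q x * x
  have hQx : ∀ s t : ℝ, s ≤ r → t ≤ r →
      ∫ x in s..t, q x * x
        = (1 + P) * (Real.log (1 - s) - Real.log (1 - t)) - (1 + P) * (t - s) := by
    intro s t hs ht
    rw [show (∫ x in s..t, q x * x) = ∫ x in s..t, g x * x from hcong (fun x => x) s t hs ht]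
    have heq : EqOn (fun x => g x * x) (fun x => (1 + P) * (1 / (1 - x)) - (1 + P))
        (Set.uIcc s t) := by
      intro x hx
      have hx1 : x < 1 := lt_of_le_of_lt (le_trans hx.2 (max_le hs ht)) hr1
      have : (1:ℝ) - x ≠ 0 := by intro h; linarith
      simp only [hg, id]
      field_simp
      ring
    rw [intervalIntegral.integral_congr heq]
    rw [intervalIntegral.integral_sub, intervalIntegral.integral_const_mul,
      int_one_div_one_sub (by linarith) (by linarith)]
    · simp; ring
    · apply IntervalIntegrable.const_mul
      apply ContinuousOn.intervalIntegrable
      apply ContinuousOn.div continuousOn_const ((continuous_const.sub continuous_id).continuousOn)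
      intro x hx
      have hx1 : x < 1 := lt_of_le_of_lt (le_trans hx.2 (max_le hs ht)) hr1
      intro h; simp only [Pi.sub_apply, id_eq] at h; linarith
    · exact intervalIntegrable_const
  -- p = q on integrals over subintervals of [0,1]
  have hpq : ∀ (m : ℝ → ℝ) (s t : ℝ), 0 ≤ s → s ≤ t → t ≤ 1 →
      ∫ x in s..t, p x * m x = ∫ x in s..t, q x * m x := by
    intro m s t h0 hst h1
    apply intervalIntegral.integral_congr
    intro x hx
    rw [Set.uIcc_of_le hst] at hx
    have hx01 : x ∈ Set.Icc (0:ℝ) 1 := ⟨le_trans h0 hx.1, le_trans hx.2 h1⟩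
    simp only
    rw [hp x hx01]
  refine ⟨?_, ?_, ?_⟩
  · -- (i)
    have h1 : ∫ x in (0:ℝ)..1, p x = ∫ x in (0:ℝ)..1, q x := by
      have := hpq (fun _ => 1) 0 1 le_rfl zero_le_one le_rfl
      simpa using this
    rw [h1, ← intervalIntegral.integral_add_adjacent_intervals (hqint 0 r) (hqint r 1)]
    have h2 : ∫ x in r..1, q x = 0 := by
      have := hzero (fun _ => 1) r 1 le_rfl (le_of_lt hr1)
      simpa using this
    rw [h2, hQ 0 r hr0.le le_rfl, hLr]
    rw [sub_zero, Real.log_one, add_zero]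
    field_simp
    ring
  · -- (ii)
    have h1 : ∫ x in (0:ℝ)..1, x * p x = ∫ x in (0:ℝ)..1, q x * x := by
      rw [intervalIntegral.integral_congr (g := fun x => p x * x)
        (fun x _ => by simp [mul_comm])]
      exact hpq (fun x => x) 0 1 le_rfl zero_le_one le_rfl
    rw [h1, show (∫ x in (0:ℝ)..1, q x * x)
        = (∫ x in (0:ℝ)..r, q x * x) + ∫ x in r..1, q x * x from
      (intervalIntegral.integral_add_adjacent_intervals
        (hqmint (fun x => x) continuous_id 0 r) (hqmint (fun x => x) continuous_id r 1)).symm]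
    have h2 : ∫ x in r..1, q x * x = 0 := hzero (fun x => x) r 1 le_rfl (le_of_lt hr1)
    have h3 := hQx 0 r hr0.le le_rfl
    rw [h2, h3, hLr]
    rw [hrmax]
    simp
    field_simp
    ring
  · -- (iii)
    intro a ha
    obtain ⟨ha0, har⟩ := ha
    have ha1 : a < 1 := lt_of_le_of_lt har hr1
    set La := Real.log (1 - a) with hLa
    -- split min integral
    have hmin_cont : Continuous (fun b : ℝ => min a b) := continuous_const.min continuous_id
    have h1 : ∫ b in (0:ℝ)..1, p b * min a b = ∫ b in (0:ℝ)..1, q b * min a b :=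
      hpq _ 0 1 le_rfl zero_le_one le_rfl
    have hsplit : ∫ b in (0:ℝ)..1, q b * min a b
        = (∫ b in (0:ℝ)..a, q b * min a b) + ∫ b in a..1, q b * min a b :=
      (intervalIntegral.integral_add_adjacent_intervals
        (hqmint _ hmin_cont 0 a) (hqmint _ hmin_cont a 1)).symm
    have h2 : ∫ b in (0:ℝ)..a, q b * min a b = ∫ b in (0:ℝ)..a, q b * b := by
      apply intervalIntegral.integral_congr
      intro b hb
      rw [Set.uIcc_of_le ha0] at hb
      simp only
      rw [min_eq_right hb.2]
    have h3 : ∫ b in a..1, q b * min a b = ∫ b in a..1, q b * a := by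
      apply intervalIntegral.integral_congr
      intro b hb
      rw [Set.uIcc_of_le (le_of_lt ha1)] at hb
      simp only
      rw [min_eq_left hb.1]
    have h4 : ∫ b in a..1, q b * a = ((1 + P) * (La - Real.log (1 - r))) * a := by
      rw [← intervalIntegral.integral_add_adjacent_intervals
        (hqmint _ continuous_const a r) (hqmint _ continuous_const r 1)]
      rw [hzero _ r 1 le_rfl (le_of_lt hr1), add_zero]
      rw [intervalIntegral.integral_mul_const, hQ a r har le_rfl]
    have h5 : ∫ b in (0:ℝ)..a, q b * b = (1 + P) * (0 - La) - (1 + P) * a := by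
      have := hQx 0 a hr0.le har
      simpa using this
    have h6 : ∫ b in (0:ℝ)..a, p b = (1 + P) * (0 - La) := by
      have hpq' := hpq (fun _ => 1) 0 a le_rfl ha0 (le_of_lt ha1)
      simp only [mul_one] at hpq'
      rw [hpq', hQ 0 a hr0.le har]
      simp [hLa]
    rw [h1, hsplit, h2, h3, h4, h5, h6, hLr]
    field_simp
    ring
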